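/- Let φ ∈ (0,1), p ∈ (φ, 1], σ ≥ 0, and let m(z) be the unique positive solution of 1/m = −z + p/(1+φm) for z < 0. Then lim_{z→0⁻} m(z) = 1/(p−φ), and consequently lim_{λ→0⁺} of the variance term σ²·φ·(d/dz)[z·m(z)]|_{z=−λ} equals σ²·φ/(p−φ). -/

import Mathlib

open Filter Topology

/-- Let φ ∈ (0,1), p ∈ (φ, 1], σ ≥ 0, and m(z) the unique
positive solution of 1/m = −z + p/(1+φm) for z < 0. Then m(z) → 1/(p−φ) as
z → 0⁻, and the variance term σ²·φ·(d/dz)[z·m(z)] tends to σ²·φ/(p−φ). -/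
theorem stmt18 (phi p σ : ℝ) (hphi : phi ∈ Set.Ioo (0 : ℝ) 1)
    (hp : phi < p) (hp1 : p ≤ 1) (hσ : 0 ≤ σ)
    (m : ℝ → ℝ)
    (hpos : ∀ z < 0, 0 < m z)
    (hfix : ∀ z < 0, 1 / m z = -z + p / (1 + phi * m z)) :
    Tendsto m (nhdsWithin 0 (Set.Iio 0)) (nhds (1 / (p - phi))) ∧
      Tendsto (fun z => σ ^ 2 * phi * deriv (fun w => w * m w) z)
        (nhdsWithin 0 (Set.Iio 0)) (nhds (σ ^ 2 * phi / (p - phi))) := by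
  obtain ⟨hphi0, hphi1⟩ := hphi
  set c : ℝ := p - phi with hc
  have hcpos : 0 < c := by simp [hc]; linarith
  set q : ℝ → ℝ := fun w => (c - w)^2 - 4*phi*w with hqdef
  set D : ℝ → ℝ := fun w => (c - w) + Real.sqrt (q w) with hDdef
  set F : ℝ → ℝ := fun w => 2 / D w with hFdef
  set F' : ℝ → ℝ := fun z =>
    (-(2 * (-1 + (2*(c-z)*(-1) - 4*phi) / (2*Real.sqrt (q z))))) / (D z)^2 with hF'def
  have hqc : Continuous q := by fun_prop
  have hq0 : q 0 = c^2 := by simp [hqdef]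
  have hsq0 : Real.sqrt (q 0) = c := by rw [hq0, Real.sqrt_sq hcpos.le]
  have hD0 : D 0 = 2*c := by simp [hDdef, hsq0]; ring
  have hF0 : F 0 = 1/c := by
    rw [hFdef]; simp only [hD0]
    rw [eq_div_iff (by positivity)]; field_simp
  -- q and D positivity for z < 0
  have hqpos : ∀ z < 0, 0 < q z := by
    intro z hz; simp only [hqdef]; nlinarith [sq_nonneg (c - z)]
  have hDpos : ∀ z < 0, 0 < D z := by
    intro z hz
    have := Real.sqrt_nonneg (q z)
    simp only [hDdef]; nlinarith
  -- m = F on Iio 0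
  have hA : ∀ z < 0, m z = F z := by
    intro z hz
    have hm := hpos z hz
    have hfx := hfix z hz
    have h1 : 0 < 1 + phi * m z := by nlinarith
    have hquad : z * phi * (m z)^2 + (z - c) * (m z) + 1 = 0 := by
      have hmne : m z ≠ 0 := ne_of_gt hm
      have h1ne : 1 + phi * m z ≠ 0 := ne_of_gt h1
      field_simp at hfx
      nlinarith [hfx]
    set s : ℝ := Real.sqrt (q z) with hs
    have hs2 : s^2 = q z := Real.sq_sqrt (hqpos z hz).le
    have hsnn : 0 ≤ s := Real.sqrt_nonneg _
    have hneg : z * phi * m z ^ 2 < 0 := by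
      have h2 := mul_pos hphi0 (pow_pos hm 2)
      nlinarith
    have hpos2 : 0 ≤ 2 - (c - z) * m z := by nlinarith
    have hsq : s ^ 2 = (c - z)^2 - 4*phi*z := by rw [hs2]
    have hkey : (s * m z)^2 = (2 - (c - z) * m z)^2 := by
      linear_combination (m z)^2 * hsq - 4*hquad
    have heq : s * m z = 2 - (c - z) * m z := by
      have h1' : 0 ≤ s * m z := mul_nonneg hsnn hm.le
      have habs : |s * m z| = |2 - (c - z) * m z| := by
        rw [← Real.sqrt_sq_eq_abs, ← Real.sqrt_sq_eq_abs, hkey]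
      rwa [abs_of_nonneg h1', abs_of_nonneg hpos2] at habs
    have hDz : D z = (c - z) + s := rfl
    have hmD : m z * D z = 2 := by rw [hDz]; linear_combination heq
    have hDne : D z ≠ 0 := ne_of_gt (hDpos z hz)
    have hFz : F z = 2 / D z := rfl
    rw [hFz, eq_comm, div_eq_iff hDne]
    linarith [hmD]
  -- continuity at 0
  have hsqc : Continuous fun z => Real.sqrt (q z) := Real.continuous_sqrt.comp hqc
  have hDc : Continuous D := by
    simp only [hDdef]; fun_prop
  have hFcont : ContinuousAt F 0 := by
    apply ContinuousAt.div continuousAt_const hDc.continuousAt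
    rw [hD0]; positivity
  have htend1 : Tendsto m (nhdsWithin 0 (Set.Iio 0)) (nhds (1 / (p - phi))) := by
    have : Tendsto F (nhdsWithin 0 (Set.Iio 0)) (nhds (1 / c)) := by
      rw [← hF0]
      exact hFcont.continuousWithinAt.tendsto
    refine this.congr' ?_
    filter_upwards [self_mem_nhdsWithin] with z hz
    exact (hA z hz).symm
  refine ⟨htend1, ?_⟩
  -- derivative facts
  have hderivF : ∀ z < 0, HasDerivAt F (F' z) z := by
    intro z hz
    have hqz := hqpos z hz
    have hDz := hDpos z hz
    have h1 : HasDerivAt (fun w : ℝ => c - w) (-1) z := by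
      simpa using (hasDerivAt_id z).const_sub c
    have h2 : HasDerivAt (fun w : ℝ => (c - w)^2) (2*(c-z)*(-1)) z := by
      have := h1.fun_pow 2
      simpa using this
    have h3 : HasDerivAt (fun w : ℝ => 4*phi*w) (4*phi) z := by
      simpa using (hasDerivAt_id z).const_mul (4*phi)
    have hqz' : HasDerivAt q (2*(c-z)*(-1) - 4*phi) z := h2.sub h3
    have hsqrt : HasDerivAt (fun w => Real.sqrt (q w))
        (1 / (2 * Real.sqrt (q z)) * (2*(c-z)*(-1) - 4*phi)) z :=
      (Real.hasDerivAt_sqrt (ne_of_gt hqz)).comp z hqz'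
    have hDd : HasDerivAt D (-1 + 1 / (2 * Real.sqrt (q z)) * (2*(c-z)*(-1) - 4*phi)) z :=
      h1.add hsqrt
    have : HasDerivAt F _ z := (hasDerivAt_const z (2:ℝ)).fun_div hDd (ne_of_gt hDz)
    convert this using 1
    simp only [hF'def]
    ring
  have hderiv_eq : ∀ z < 0, deriv (fun w => w * m w) z = F z + z * F' z := by
    intro z hz
    have hev : (fun w => w * m w) =ᶠ[nhds z] (fun w => w * F w) := by
      filter_upwards [Iio_mem_nhds hz] with w hw
      rw [hA w hw]
    rw [hev.deriv_eq]
    have hprod : HasDerivAt (fun w => w * F w) (1 * F z + z * F' z) z :=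
      (hasDerivAt_id z).mul (hderivF z hz)
    rw [hprod.deriv]; ring
  -- continuity of F' at 0
  have hF'cont : ContinuousAt F' 0 := by
    simp only [hF'def]
    apply ContinuousAt.div
    · apply ContinuousAt.neg
      apply ContinuousAt.mul continuousAt_const
      apply ContinuousAt.add continuousAt_const
      apply ContinuousAt.div (by fun_prop) (by fun_prop)
      rw [hsq0]; positivity
    · fun_prop
    · rw [hD0]; positivity
  have hGcont : ContinuousAt (fun z => F z + z * F' z) 0 :=
    hFcont.add (continuousAt_id.mul hF'cont)
  have hG0 : F 0 + 0 * F' 0 = 1 / c := by rw [hF0]; ring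
  have htendG : Tendsto (fun z => F z + z * F' z) (nhdsWithin 0 (Set.Iio 0)) (nhds (1/c)) := by
    rw [← hG0]
    exact hGcont.continuousWithinAt.tendsto
  have : Tendsto (fun z => σ ^ 2 * phi * (F z + z * F' z)) (nhdsWithin 0 (Set.Iio 0))
      (nhds (σ ^ 2 * phi * (1/c))) := htendG.const_mul _
  have hval : σ ^ 2 * phi * (1/c) = σ ^ 2 * phi / (p - phi) := by
    rw [hc]; ring
  rw [← hval]
  refine this.congr' ?_
  filter_upwards [self_mem_nhdsWithin] with z hz
  rw [hderiv_eq z hz]
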